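/- The theoretical extended variance V(x) := (1/2) Σ_{i,j∈I} Λ(i-j) ∫_{C_i(x)} ‖x_j - ω‖² dP(ω) is continuous on D_I^δ, provided P has a density bounded by B with respect to Lebesgue measure on [0,1]^d. -/

import Mathlib

open MeasureTheory Finset Topology Filter

noncomputable section

abbrev Eu (d : ℕ) := EuclideanSpace ℝ (Fin d)

def cube (d : ℕ) : Set (Eu d) := {ω | ∀ i, ω i ∈ Set.Icc (0:ℝ) 1}

def vIndex {d : ℕ} {ι : Type*} [Fintype ι] [LinearOrder ι] [Nonempty ι]
    (x : ι → Eu d) (ω : Eu d) : ι :=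
  (Finset.univ.filter fun i => ∀ j, dist (x i) ω ≤ dist (x j) ω).min' (by
    obtain ⟨i, -, hi⟩ := Finset.exists_min_image Finset.univ
      (fun j => dist (x j) ω) ⟨Classical.arbitrary ι, Finset.mem_univ _⟩
    exact ⟨i, Finset.mem_filter.2 ⟨Finset.mem_univ _,
      fun j => hi j (Finset.mem_univ _)⟩⟩)

def vCell {d : ℕ} {ι : Type*} [Fintype ι] [LinearOrder ι] [Nonempty ι]
    (x : ι → Eu d) (i : ι) : Set (Eu d) :=
  {ω ∈ cube d | vIndex x ω = i}

def sep {d : ℕ} {ι : Type*} (δ : ℝ) : Set (ι → Eu d) :=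
  {x | (∀ i, x i ∈ cube d) ∧ ∀ i j, i ≠ j → δ ≤ dist (x i) (x j)}

def gfun {d : ℕ} {ι : Type*} [Fintype ι] [LinearOrder ι] [Nonempty ι]
    (Λ : ι → ι → ℝ) (x : ι → Eu d) (ω : Eu d) : ℝ :=
  ∑ j, Λ (vIndex x ω) j * ‖x j - ω‖ ^ 2

def extVar {d : ℕ} {ι : Type*} [Fintype ι] [LinearOrder ι] [Nonempty ι]
    (Λ : ι → ι → ℝ) (P : Measure (Eu d)) (x : ι → Eu d) : ℝ :=
  (1/2) * ∑ i, ∑ j, Λ i j * ∫ ω in vCell x i, ‖x j - ω‖ ^ 2 ∂P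

section Aux

variable {d : ℕ} {ι : Type*} [Fintype ι] [LinearOrder ι] [Nonempty ι]

lemma vIndex_min (x : ι → Eu d) (ω : Eu d) (k : ι) :
    dist (x (vIndex x ω)) ω ≤ dist (x k) ω := by
  have := Finset.min'_mem (Finset.univ.filter fun i => ∀ j, dist (x i) ω ≤ dist (x j) ω)
    (by
      obtain ⟨i, -, hi⟩ := Finset.exists_min_image Finset.univ
        (fun j => dist (x j) ω) ⟨Classical.arbitrary ι, Finset.mem_univ _⟩
      exact ⟨i, Finset.mem_filter.2 ⟨Finset.mem_univ _, fun j => hi j (Finset.mem_univ _)⟩⟩)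
  exact (Finset.mem_filter.1 this).2 k

lemma vIndex_eq_of (x : ι → Eu d) (ω : Eu d) (i₀ : ι)
    (h : ∀ j, j ≠ i₀ → dist (x i₀) ω < dist (x j) ω) : vIndex x ω = i₀ := by
  have hF : (Finset.univ.filter fun i => ∀ j, dist (x i) ω ≤ dist (x j) ω) = {i₀} := by
    ext j
    simp only [Finset.mem_filter, Finset.mem_univ, true_and, Finset.mem_singleton]
    constructor
    · intro hj
      by_contra hne
      exact absurd (hj i₀) (not_le.2 (h j hne))
    · intro hj k
      rw [hj]
      rcases eq_or_ne k i₀ with rfl | hk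
      · exact le_refl _
      · exact (h k hk).le
  unfold vIndex
  simp [hF]

lemma measurableSet_vIndex (x : ι → Eu d) (i : ι) :
    MeasurableSet {ω : Eu d | vIndex x ω = i} := by
  have hset : {ω : Eu d | vIndex x ω = i} =
      {ω : Eu d | ∀ k, dist (x i) ω ≤ dist (x k) ω} ∩
      ⋂ j, {ω : Eu d | (∀ k, dist (x j) ω ≤ dist (x k) ω) → i ≤ j} := by
    ext ω
    simp only [Set.mem_inter_iff, Set.mem_iInter, Set.mem_setOf_eq]
    constructor
    · rintro rfl
      refine ⟨fun k => vIndex_min x ω k, fun j hj => ?_⟩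
      exact Finset.min'_le _ j (Finset.mem_filter.2 ⟨Finset.mem_univ _, hj⟩)
    · rintro ⟨h1, h2⟩
      have hmem : i ∈ Finset.univ.filter fun k => ∀ l, dist (x k) ω ≤ dist (x l) ω :=
        Finset.mem_filter.2 ⟨Finset.mem_univ _, h1⟩
      have hle : vIndex x ω ≤ i := Finset.min'_le _ i hmem
      have hge : i ≤ vIndex x ω := h2 _ (fun k => vIndex_min x ω k)
      exact le_antisymm hle hge
  rw [hset]
  have hA : ∀ j : ι, MeasurableSet {ω : Eu d | ∀ k, dist (x j) ω ≤ dist (x k) ω} := by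
    intro j
    have : {ω : Eu d | ∀ k, dist (x j) ω ≤ dist (x k) ω} =
        ⋂ k, {ω : Eu d | dist (x j) ω ≤ dist (x k) ω} := by ext; simp
    rw [this]
    exact MeasurableSet.iInter fun k =>
      (isClosed_le (continuous_const.dist continuous_id) (continuous_const.dist continuous_id)).measurableSet
  refine (hA i).inter (MeasurableSet.iInter fun j => ?_)
  by_cases hij : i ≤ j
  · have : {ω : Eu d | (∀ k, dist (x j) ω ≤ dist (x k) ω) → i ≤ j} = Set.univ := by
      ext; simp [hij]
    rw [this]; exact MeasurableSet.univ
  · have : {ω : Eu d | (∀ k, dist (x j) ω ≤ dist (x k) ω) → i ≤ j} =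
        {ω : Eu d | ∀ k, dist (x j) ω ≤ dist (x k) ω}ᶜ := by
      ext ω; simp [hij]
    rw [this]; exact (hA j).compl

lemma isClosed_cube : IsClosed (cube d) := by
  have : cube d = ⋂ i, (fun ω : Eu d => ω i) ⁻¹' Set.Icc (0:ℝ) 1 := by
    ext ω; simp [cube]
  rw [this]
  exact isClosed_iInter fun i =>
    IsClosed.preimage (EuclideanSpace.proj (𝕜 := ℝ) i).continuous isClosed_Icc

lemma measurableSet_vCell (x : ι → Eu d) (i : ι) : MeasurableSet (vCell x i) :=
  (isClosed_cube.measurableSet).inter (measurableSet_vIndex x i)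

lemma mem_vCell_iff {x : ι → Eu d} {i : ι} {ω : Eu d} :
    ω ∈ vCell x i ↔ ω ∈ cube d ∧ vIndex x ω = i := Iff.rfl

lemma norm_le_sqrt_of_cube {ω : Eu d} (hω : ω ∈ cube d) : ‖ω‖ ≤ Real.sqrt d := by
  rw [EuclideanSpace.norm_eq]
  apply Real.sqrt_le_sqrt
  calc ∑ i, ‖ω i‖ ^ 2 ≤ ∑ _i : Fin d, (1:ℝ) := by
        apply Finset.sum_le_sum
        intro i _
        have := hω i
        have h1 : |ω i| ≤ 1 := abs_le.2 ⟨by linarith [this.1], this.2⟩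
        calc ‖ω i‖ ^ 2 = |ω i| ^ 2 := by rw [Real.norm_eq_abs]
          _ ≤ 1 ^ 2 := by apply pow_le_pow_left₀ (abs_nonneg _) h1
          _ = 1 := one_pow 2
    _ = d := by simp

lemma bisector_volume_zero {a b : Eu d} (hab : a ≠ b) :
    volume {ω : Eu d | dist a ω = dist b ω} = 0 := by
  have hset : {ω : Eu d | dist a ω = dist b ω} = (AffineSubspace.perpBisector a b : Set (Eu d)) := by
    ext ω
    simp [AffineSubspace.mem_perpBisector_iff_dist_eq']
  rw [hset]
  exact Measure.addHaar_affineSubspace volume _ (by simpa [AffineSubspace.perpBisector_eq_top] using hab)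

end Aux

theorem stmt12 {d : ℕ} {ι : Type*} [Fintype ι] [LinearOrder ι] [Nonempty ι]
    (Λ : ι → ι → ℝ) (hΛmem : ∀ i j, Λ i j ∈ Set.Icc (0:ℝ) 1)
    (hΛsymm : ∀ i j, Λ i j = Λ j i) (hΛ0 : ∀ i, Λ i i = 1)
    (δ B : ℝ) (hδ : 0 < δ) (hB : 0 < B)
    (P : Measure (Eu d)) [IsProbabilityMeasure P] (hPcube : P (cube d) = 1)
    (hPB : ∀ s : Set (Eu d), MeasurableSet s →
      P s ≤ ENNReal.ofReal B * volume s) :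
    ContinuousOn (extVar Λ P) (sep δ : Set (ι → Eu d)) := by
  unfold extVar
  -- per-term continuity
  have key : ∀ i j : ι, ∀ x₀ ∈ (sep δ : Set (ι → Eu d)),
      ContinuousWithinAt (fun x : ι → Eu d => ∫ ω in vCell x i, ‖x j - ω‖ ^ 2 ∂P)
        (sep δ) x₀ := by
    intro i j x₀ hx₀
    have hrw : ∀ x : ι → Eu d, ∫ ω in vCell x i, ‖x j - ω‖ ^ 2 ∂P
        = ∫ ω, Set.indicator (vCell x i) (fun ω => ‖x j - ω‖ ^ 2) ω ∂P :=
      fun x => (integral_indicator (measurableSet_vCell x i)).symm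
    unfold ContinuousWithinAt
    simp only [hrw]
    -- the null set of bisectors
    set N : Set (Eu d) := ⋃ p : ι × ι, ⋃ (_ : p.1 ≠ p.2),
      {ω : Eu d | dist (x₀ p.1) ω = dist (x₀ p.2) ω} with hN_def
    have hPN : P N = 0 := by
      apply measure_iUnion_null
      intro p
      apply measure_iUnion_null
      intro hp
      have hne : x₀ p.1 ≠ x₀ p.2 := by
        intro h
        have := hx₀.2 p.1 p.2 hp
        rw [h, dist_self] at this
        linarith
      have hclosed : IsClosed {ω : Eu d | dist (x₀ p.1) ω = dist (x₀ p.2) ω} :=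
        isClosed_eq (continuous_const.dist continuous_id) (continuous_const.dist continuous_id)
      have := hPB _ hclosed.measurableSet
      rw [bisector_volume_zero hne, mul_zero] at this
      exact le_antisymm this zero_le
    apply tendsto_integral_filter_of_dominated_convergence
      (fun _ => (2 * Real.sqrt d) ^ 2)
    · -- measurability
      apply Filter.Eventually.of_forall
      intro x
      exact (((continuous_const.sub continuous_id).norm.pow 2).aestronglyMeasurable).indicator
        (measurableSet_vCell x i)
    · -- bound
      filter_upwards [eventually_mem_nhdsWithin] with x hx
      apply ae_of_all
      intro ω
      by_cases hω : ω ∈ vCell x i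
      · rw [Set.indicator_of_mem hω]
        rw [Real.norm_eq_abs, abs_of_nonneg (by positivity)]
        have h1 : ‖x j - ω‖ ≤ 2 * Real.sqrt d := by
          calc ‖x j - ω‖ ≤ ‖x j‖ + ‖ω‖ := norm_sub_le _ _
            _ ≤ Real.sqrt d + Real.sqrt d :=
                add_le_add (norm_le_sqrt_of_cube (hx.1 j)) (norm_le_sqrt_of_cube hω.1)
            _ = 2 * Real.sqrt d := by ring
        exact pow_le_pow_left₀ (norm_nonneg _) h1 2
      · rw [Set.indicator_of_notMem hω]
        simp only [norm_zero]
        positivity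
    · exact integrable_const _
    · -- a.e. pointwise convergence
      have hae : ∀ᵐ ω ∂P, ω ∉ N := by
        rw [MeasureTheory.ae_iff]
        simpa using hPN
      filter_upwards [hae] with ω hω
      set i₀ := vIndex x₀ ω with hi₀
      have hstrict : ∀ k, k ≠ i₀ → dist (x₀ i₀) ω < dist (x₀ k) ω := by
        intro k hk
        refine lt_of_le_of_ne (vIndex_min x₀ ω k) ?_
        intro heq
        apply hω
        refine Set.mem_iUnion.2 ⟨(i₀, k), Set.mem_iUnion.2 ⟨fun h => hk h.symm, heq⟩⟩
      have hev : ∀ᶠ x in 𝓝 x₀, vIndex x ω = i₀ := by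
        have h1 : ∀ᶠ x : ι → Eu d in 𝓝 x₀, ∀ k, k ≠ i₀ → dist (x i₀) ω < dist (x k) ω := by
          rw [Filter.eventually_all]
          intro k
          rcases eq_or_ne k i₀ with rfl | hk
          · exact Filter.Eventually.of_forall fun x h => absurd rfl h
          · have hopen : IsOpen {x : ι → Eu d | dist (x i₀) ω < dist (x k) ω} :=
              isOpen_lt ((continuous_apply i₀).dist continuous_const)
                ((continuous_apply k).dist continuous_const)
            have hmem : x₀ ∈ {x : ι → Eu d | dist (x i₀) ω < dist (x k) ω} := hstrict k hk
            filter_upwards [hopen.mem_nhds hmem] with x hx _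
            exact hx
        filter_upwards [h1] with x hx
        exact vIndex_eq_of x ω i₀ hx
      have hev' : ∀ᶠ x in 𝓝[sep δ] x₀,
          Set.indicator (vCell x i) (fun ω' => ‖x j - ω'‖ ^ 2) ω
            = Set.indicator (vCell x₀ i) (fun ω' => ‖x j - ω'‖ ^ 2) ω := by
        filter_upwards [hev.filter_mono nhdsWithin_le_nhds] with x hx
        have hiff : ω ∈ vCell x i ↔ ω ∈ vCell x₀ i := by
          rw [mem_vCell_iff, mem_vCell_iff, hx, hi₀]
        by_cases hm : ω ∈ vCell x₀ i
        · rw [Set.indicator_of_mem (hiff.2 hm), Set.indicator_of_mem hm]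
        · rw [Set.indicator_of_notMem (fun h => hm (hiff.1 h)),
            Set.indicator_of_notMem hm]
      apply Filter.Tendsto.congr' (Filter.EventuallyEq.symm hev')
      by_cases hm : ω ∈ vCell x₀ i
      · simp only [Set.indicator_of_mem hm]
        exact ((((continuous_apply j).sub continuous_const).norm.pow 2).tendsto x₀).mono_left
          nhdsWithin_le_nhds
      · simp only [Set.indicator_of_notMem hm]
        exact tendsto_const_nhds
  intro x₀ hx₀
  exact Filter.Tendsto.const_mul _ (tendsto_finset_sum _ fun i _ =>
    tendsto_finset_sum _ fun j _ => Filter.Tendsto.const_mul _ (key i j x₀ hx₀))
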